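/- Let (z, n, s): U → ℝ³ × Δ be a framed surface, where Δ = {(a,b) ∈ S² × S² : a·b = 0}, with basic invariants a₁, b₁, a₂, b₂ defined by z_t = a₁s + b₁t, z_θ = a₂s + b₂t, where t = n × s. For the helicoidal surface z(t,θ) = (x(t)cos θ, x(t)sin θ, cθ + z(t)) with n as in equation (nuz) and s(t,θ) = (1/ξ(t))(-c sin φ cos φ cos θ + x sin θ, -c sin φ cos φ sin θ - x cos θ, -c sin²φ), the invariants are a₁ = 0, b₁ = -β(t), a₂ = -ξ(t), b₂ = -c cos φ(t), where ξ(t) = √(c² sin²φ(t) + x(t)²). -/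

import Mathlib

/-- Normal `n` of the helicoidal framed surface. -/
noncomputable def N1 (c : ℝ) (x φ ξ : ℝ → ℝ) (t θ : ℝ) : ℝ :=
  (c * Real.sin (φ t) * Real.sin θ + x t * Real.cos (φ t) * Real.cos θ) / ξ t
noncomputable def N2 (c : ℝ) (x φ ξ : ℝ → ℝ) (t θ : ℝ) : ℝ :=
  (-(c * Real.sin (φ t)) * Real.cos θ + x t * Real.cos (φ t) * Real.sin θ) / ξ t
noncomputable def N3 (c : ℝ) (x φ ξ : ℝ → ℝ) (t _θ : ℝ) : ℝ :=
  x t * Real.sin (φ t) / ξ t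

/-- The field `s` of the helicoidal framed surface. -/
noncomputable def S1 (c : ℝ) (x φ ξ : ℝ → ℝ) (t θ : ℝ) : ℝ :=
  (-(c * Real.sin (φ t) * Real.cos (φ t)) * Real.cos θ + x t * Real.sin θ) / ξ t
noncomputable def S2 (c : ℝ) (x φ ξ : ℝ → ℝ) (t θ : ℝ) : ℝ :=
  (-(c * Real.sin (φ t) * Real.cos (φ t)) * Real.sin θ - x t * Real.cos θ) / ξ t
noncomputable def S3 (c : ℝ) (x φ ξ : ℝ → ℝ) (t _θ : ℝ) : ℝ :=
  -(c * Real.sin (φ t) ^ 2) / ξ t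

/-- `t = n × s`. -/
noncomputable def T1 (c : ℝ) (x φ ξ : ℝ → ℝ) (t θ : ℝ) : ℝ :=
  N2 c x φ ξ t θ * S3 c x φ ξ t θ - N3 c x φ ξ t θ * S2 c x φ ξ t θ
noncomputable def T2 (c : ℝ) (x φ ξ : ℝ → ℝ) (t θ : ℝ) : ℝ :=
  N3 c x φ ξ t θ * S1 c x φ ξ t θ - N1 c x φ ξ t θ * S3 c x φ ξ t θ
noncomputable def T3 (c : ℝ) (x φ ξ : ℝ → ℝ) (t θ : ℝ) : ℝ :=
  N1 c x φ ξ t θ * S2 c x φ ξ t θ - N2 c x φ ξ t θ * S1 c x φ ξ t θ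

/-- Basic invariants of the helicoidal framed surface `(z, n, s)`:
`a₁ = z_t·s = 0`, `b₁ = z_t·t = -β`, `a₂ = z_θ·s = -ξ`, `b₂ = z_θ·t = -c cos φ`. -/
theorem stmt_9
    (x z φ β ℓ ξ : ℝ → ℝ) (c : ℝ)
    (hx : Differentiable ℝ x) (hz : Differentiable ℝ z) (hφ : Differentiable ℝ φ)
    (hx' : ∀ t, deriv x t = -β t * Real.sin (φ t))
    (hz' : ∀ t, deriv z t = β t * Real.cos (φ t))
    (hφ' : ∀ t, deriv φ t = ℓ t)
    (hξ : ∀ t, ξ t = Real.sqrt (c ^ 2 * Real.sin (φ t) ^ 2 + x t ^ 2))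
    (hξ0 : ∀ t, ξ t ≠ 0) :
    ∀ t θ : ℝ,
      (deriv (fun s => x s * Real.cos θ) t * S1 c x φ ξ t θ +
        deriv (fun s => x s * Real.sin θ) t * S2 c x φ ξ t θ +
        deriv (fun s => c * θ + z s) t * S3 c x φ ξ t θ = 0) ∧
      (deriv (fun s => x s * Real.cos θ) t * T1 c x φ ξ t θ +
        deriv (fun s => x s * Real.sin θ) t * T2 c x φ ξ t θ +
        deriv (fun s => c * θ + z s) t * T3 c x φ ξ t θ = -β t) ∧
      (deriv (fun ϑ => x t * Real.cos ϑ) θ * S1 c x φ ξ t θ +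
        deriv (fun ϑ => x t * Real.sin ϑ) θ * S2 c x φ ξ t θ +
        deriv (fun ϑ => c * ϑ + z t) θ * S3 c x φ ξ t θ = -ξ t) ∧
      (deriv (fun ϑ => x t * Real.cos ϑ) θ * T1 c x φ ξ t θ +
        deriv (fun ϑ => x t * Real.sin ϑ) θ * T2 c x φ ξ t θ +
        deriv (fun ϑ => c * ϑ + z t) θ * T3 c x φ ξ t θ = -(c * Real.cos (φ t))) := by
  intro t θ
  have hpθ : Real.sin θ ^ 2 + Real.cos θ ^ 2 = 1 := Real.sin_sq_add_cos_sq θ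
  have hpφ : Real.sin (φ t) ^ 2 + Real.cos (φ t) ^ 2 = 1 := Real.sin_sq_add_cos_sq (φ t)
  have he : ξ t ^ 2 = c ^ 2 * Real.sin (φ t) ^ 2 + x t ^ 2 := by
    rw [hξ t]; exact Real.sq_sqrt (by positivity)
  have hu := hξ0 t
  have hd1 : deriv (fun s => x s * Real.cos θ) t = -β t * Real.sin (φ t) * Real.cos θ := by
    rw [deriv_mul_const (hx t), hx' t]
  have hd2 : deriv (fun s => x s * Real.sin θ) t = -β t * Real.sin (φ t) * Real.sin θ := by
    rw [deriv_mul_const (hx t), hx' t]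
  have hd3 : deriv (fun s => c * θ + z s) t = β t * Real.cos (φ t) := by
    rw [deriv_const_add, hz' t]
  have hd4 : deriv (fun ϑ => x t * Real.cos ϑ) θ = -(x t * Real.sin θ) := by
    have := ((Real.hasDerivAt_cos θ).const_mul (x t)).deriv
    simpa [mul_comm] using this
  have hd5 : deriv (fun ϑ => x t * Real.sin ϑ) θ = x t * Real.cos θ := by
    have := ((Real.hasDerivAt_sin θ).const_mul (x t)).deriv
    simpa using this
  have hd6 : deriv (fun ϑ => c * ϑ + z t) θ = c := by
    have : HasDerivAt (fun ϑ : ℝ => c * ϑ + z t) c θ := by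
      simpa using ((hasDerivAt_id θ).const_mul c).add_const (z t)
    exact this.deriv
  have hT1 : T1 c x φ ξ t θ = Real.sin (φ t) * Real.cos θ := by
    simp only [T1, N2, N3, S2, S3]
    field_simp
    linear_combination (-(Real.sin (φ t) * Real.cos θ)) * he
  have hT2 : T2 c x φ ξ t θ = Real.sin (φ t) * Real.sin θ := by
    simp only [T2, N1, N3, S1, S3]
    field_simp
    linear_combination (-(Real.sin (φ t) * Real.sin θ)) * he
  have hT3 : T3 c x φ ξ t θ = -Real.cos (φ t) := by
    simp only [T3, N1, N2, S1, S2]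
    field_simp
    linear_combination (Real.cos (φ t)) * he +
      (-(c ^ 2 * Real.sin (φ t) ^ 2 * Real.cos (φ t) + x t ^ 2 * Real.cos (φ t))) * hpθ
  refine ⟨?_, ?_, ?_, ?_⟩
  · rw [hd1, hd2, hd3]
    simp only [S1, S2, S3]
    field_simp
    linear_combination (β t * c * Real.sin (φ t) ^ 2 * Real.cos (φ t)) * hpθ
  · rw [hd1, hd2, hd3, hT1, hT2, hT3]
    linear_combination (-β t * Real.sin (φ t) ^ 2) * hpθ + (-β t) * hpφ
  · rw [hd4, hd5, hd6]
    simp only [S1, S2, S3]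
    field_simp
    linear_combination he + (-(x t ^ 2)) * hpθ
  · rw [hd4, hd5, hd6, hT1, hT2, hT3]
    ring
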